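/- Let g : ℤ² → ℂ satisfy g(x,y) = 0 whenever |x| ≥ R or |y| ≥ R, for some positive integer R, and let N be an integer with N > 6R + 2. Let M_ℤ denote the Margulis walk operator on functions on ℤ², (M_ℤ g)(v) = (1/8)·Σ_{T∈𝒮_ℤ} g(T⁻¹(v)), and let M_N denote the Margulis walk operator on functions on (ZMod N)². Let g̅ : (ZMod N)² → ℂ be the reduction of g mod N (well-defined since each residue class meets the support of g at most once). Then ‖g̅‖₂ = ‖g‖₂ and ‖M_N g̅‖₂ = ‖M_ℤ g‖₂, where ‖·‖₂ denotes the ℓ² norm on the respective index sets. -/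

import Mathlib

open BigOperators

noncomputable section

/-- The eight Margulis transformations, over any commutative ring.
Indices 0–3 are `T₁(v) = S₁v`, `T₂(v) = S₁v + (1,0)ᵀ`, `T₃(v) = S₂v`,
`T₄(v) = S₂v − (0,1)ᵀ` with `S₁ = [[1,2],[0,1]]`, `S₂ = [[1,0],[2,1]]`;
indices 4–7 are their respective inverses. -/
def marg {R : Type*} [CommRing R] : Fin 8 → R × R → R × R
  | 0 => fun v => (v.1 + 2 * v.2, v.2)
  | 1 => fun v => (v.1 + 2 * v.2 + 1, v.2)
  | 2 => fun v => (v.1, v.2 + 2 * v.1)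
  | 3 => fun v => (v.1, v.2 + 2 * v.1 - 1)
  | 4 => fun v => (v.1 - 2 * v.2, v.2)
  | 5 => fun v => (v.1 - 2 * v.2 - 1, v.2)
  | 6 => fun v => (v.1, v.2 - 2 * v.1)
  | 7 => fun v => (v.1, v.2 - 2 * v.1 + 1)

/-- The inverse of the `i`-th Margulis transformation (the family is closed under
inverses: `marg (i+4)` is the inverse of `marg i`). -/
def margInv {R : Type*} [CommRing R] (i : Fin 8) : R × R → R × R := marg (i + 4)

/-- The reduction of a (finitely supported) function on `ℤ²` to `(ZMod N)²`, summing
over each residue class. -/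
def reduceMod (N : ℕ) (g : ℤ × ℤ → ℂ) : ZMod N × ZMod N → ℂ :=
  fun v => ∑' p : ℤ × ℤ, if ((p.1 : ZMod N), (p.2 : ZMod N)) = v then g p else 0


lemma marg_margInv {R : Type*} [CommRing R] (i : Fin 8) (v : R × R) :
    marg i (margInv i v) = v := by
  fin_cases i <;> simp [marg, margInv, Prod.ext_iff] <;> ring_nf

lemma margInv_marg {R : Type*} [CommRing R] (i : Fin 8) (v : R × R) :
    margInv i (marg i v) = v := by
  fin_cases i <;> simp [marg, margInv, Prod.ext_iff] <;> ring_nf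

lemma cast_marg (N : ℕ) (i : Fin 8) (p : ℤ × ℤ) :
    (((marg i p).1 : ZMod N), ((marg i p).2 : ZMod N))
      = marg i ((p.1 : ZMod N), (p.2 : ZMod N)) := by
  fin_cases i <;> simp only [marg, Prod.ext_iff] <;> push_cast <;> exact ⟨by simp, by simp⟩

/-- Reindexing equivalence given by `marg i`. -/
def margEquiv (i : Fin 8) : (ℤ × ℤ) ≃ (ℤ × ℤ) where
  toFun := marg i
  invFun := margInv i
  left_inv := margInv_marg i
  right_inv := marg_margInv i

lemma marg_supp (R : ℕ) (g : ℤ × ℤ → ℂ)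
    (hsupp : ∀ p : ℤ × ℤ, ((R : ℤ) ≤ |p.1| ∨ (R : ℤ) ≤ |p.2|) → g p = 0)
    (i : Fin 8) (p : ℤ × ℤ)
    (hp : ((3 * R : ℕ) : ℤ) ≤ |p.1| ∨ ((3 * R : ℕ) : ℤ) ≤ |p.2|) :
    g (margInv i p) = 0 := by
  apply hsupp
  push_cast at hp
  rw [le_abs, le_abs] at hp
  fin_cases i <;> simp [marg, margInv, le_abs] <;> omega

/-- Key lemma: for `h` supported in the open box `(-B, B)²` with `2B ≤ N`, reduction
mod `N` preserves the sum of squared absolute values. -/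
lemma sum_sq_reduce (B : ℕ) (h : ℤ × ℤ → ℂ)
    (hs : ∀ p : ℤ × ℤ, ((B : ℤ) ≤ |p.1| ∨ (B : ℤ) ≤ |p.2|) → h p = 0)
    (N : ℕ) [NeZero N] (hN : 2 * B ≤ N) :
    ∑ v : ZMod N × ZMod N, ‖reduceMod N h v‖ ^ 2
      = ∑' p : ℤ × ℤ, ‖h p‖ ^ 2 := by
  classical
  set S : Finset (ℤ × ℤ) :=
    Finset.Ioo (-(B : ℤ)) B ×ˢ Finset.Ioo (-(B : ℤ)) B with hS
  have hmem : ∀ p : ℤ × ℤ, p ∈ S ↔ (-(B:ℤ) < p.1 ∧ p.1 < B) ∧ (-(B:ℤ) < p.2 ∧ p.2 < B) := by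
    intro p; simp [hS, Finset.mem_product]
  have hout : ∀ p ∉ S, h p = 0 := by
    intro p hp
    apply hs
    rw [hmem] at hp
    rw [le_abs, le_abs]
    omega
  have hinj : ∀ p ∈ S, ∀ q ∈ S,
      ((p.1 : ZMod N), (p.2 : ZMod N)) = ((q.1 : ZMod N), (q.2 : ZMod N)) → p = q := by
    intro p hp q hq hpq
    rw [hmem] at hp hq
    rw [Prod.ext_iff] at hpq ⊢
    obtain ⟨h1, h2⟩ := hpq
    rw [ZMod.intCast_eq_intCast_iff'] at h1 h2
    have d1 := (Int.emod_emod_of_dvd _ dvd_rfl) ▸ h1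
    have hd1 : (N : ℤ) ∣ q.1 - p.1 := Int.ModEq.dvd h1
    have hd2 : (N : ℤ) ∣ q.2 - p.2 := Int.ModEq.dvd h2
    have e1 : q.1 - p.1 = 0 := by
      refine Int.eq_zero_of_abs_lt_dvd hd1 ?_
      rw [abs_lt]; omega
    have e2 : q.2 - p.2 = 0 := by
      refine Int.eq_zero_of_abs_lt_dvd hd2 ?_
      rw [abs_lt]; omega
    omega
  have hred : ∀ v : ZMod N × ZMod N,
      reduceMod N h v
        = ∑ p ∈ S.filter (fun p => ((p.1 : ZMod N), (p.2 : ZMod N)) = v), h p := by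
    intro v
    rw [reduceMod, tsum_eq_sum (s := S)
      (by intro p hp; rw [hout p hp]; simp), Finset.sum_filter]
  rw [tsum_eq_sum (s := S) (by intro p hp; rw [hout p hp]; simp)]
  rw [← Finset.sum_fiberwise_of_maps_to
    (g := fun p : ℤ × ℤ => ((p.1 : ZMod N), (p.2 : ZMod N)))
    (fun p _ => Finset.mem_univ _) (fun p => ‖h p‖ ^ 2)]
  refine Finset.sum_congr rfl fun v _ => ?_
  rw [hred]
  set T := S.filter (fun p => ((p.1 : ZMod N), (p.2 : ZMod N)) = v) with hT
  rcases T.eq_empty_or_nonempty with he | ⟨a, ha⟩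
  · simp [he]
  · have hTa : T = {a} := by
      rw [Finset.eq_singleton_iff_unique_mem]
      refine ⟨ha, fun b hb => ?_⟩
      rw [hT, Finset.mem_filter] at ha hb
      exact hinj b hb.1 a ha.1 (hb.2.trans ha.2.symm)
    simp [hTa]

lemma tsum_ite_marg (N : ℕ) (g : ℤ × ℤ → ℂ) (i : Fin 8) (v : ZMod N × ZMod N) :
    (∑' p : ℤ × ℤ, if ((p.1 : ZMod N), (p.2 : ZMod N)) = v then g (margInv i p) else 0)
      = reduceMod N g (margInv i v) := by
  rw [reduceMod, ← (margEquiv i).tsum_eq]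
  refine tsum_congr fun q => ?_
  have h1 : ((((margEquiv i) q).1 : ZMod N), (((margEquiv i) q).2 : ZMod N))
      = marg i ((q.1 : ZMod N), (q.2 : ZMod N)) := cast_marg N i q
  have h2 : margInv i ((margEquiv i) q) = q := margInv_marg i q
  rw [h1, h2]
  congr 1
  simp only [eq_iff_iff]
  constructor
  · intro h; rw [← h, margInv_marg]
  · intro h; rw [h, marg_margInv]

/-- if `g : ℤ² → ℂ` vanishes whenever `|x| ≥ R` or `|y| ≥ R` and
`N > 6R + 2`, then the reduction `ḡ` of `g` mod `N` satisfies `‖ḡ‖₂ = ‖g‖₂` and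
`‖M_N ḡ‖₂ = ‖M_ℤ g‖₂`, where `M` denotes the respective Margulis walk operators. -/
theorem reduction_preserves_norms (R : ℕ) (hR : 0 < R) (g : ℤ × ℤ → ℂ)
    (hsupp : ∀ p : ℤ × ℤ, ((R : ℤ) ≤ |p.1| ∨ (R : ℤ) ≤ |p.2|) → g p = 0)
    (N : ℕ) [NeZero N] (hN : 6 * R + 2 < N) :
    Real.sqrt (∑ v : ZMod N × ZMod N, ‖reduceMod N g v‖ ^ 2)
      = Real.sqrt (∑' p : ℤ × ℤ, ‖g p‖ ^ 2)
    ∧ Real.sqrt (∑ v : ZMod N × ZMod N,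
          ‖(1 / 8 : ℂ) * ∑ i : Fin 8, reduceMod N g (margInv i v)‖ ^ 2)
      = Real.sqrt (∑' p : ℤ × ℤ,
          ‖(1 / 8 : ℂ) * ∑ i : Fin 8, g (margInv i p)‖ ^ 2) := by
    classical
  constructor
  · rw [sum_sq_reduce R g hsupp N (by omega)]
  · set h : ℤ × ℤ → ℂ := fun p => (1 / 8 : ℂ) * ∑ i : Fin 8, g (margInv i p) with hh
    have hsh : ∀ p : ℤ × ℤ, (((3 * R : ℕ) : ℤ) ≤ |p.1| ∨ ((3 * R : ℕ) : ℤ) ≤ |p.2|) →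
        h p = 0 := by
      intro p hp
      have hz : ∀ i : Fin 8, g (margInv i p) = 0 := fun i => marg_supp R g hsupp i p hp
      simp [hh, hz]
    have key : ∀ v : ZMod N × ZMod N,
        (1 / 8 : ℂ) * ∑ i : Fin 8, reduceMod N g (margInv i v) = reduceMod N h v := by
      intro v
      rw [reduceMod]
      have step1 : (∑' p : ℤ × ℤ, if ((p.1 : ZMod N), (p.2 : ZMod N)) = v then h p else 0)
          = (1 / 8 : ℂ) * ∑' p : ℤ × ℤ,
              ∑ i : Fin 8, (if ((p.1 : ZMod N), (p.2 : ZMod N)) = v then g (margInv i p) else 0) := by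
        rw [← tsum_mul_left]
        refine tsum_congr fun p => ?_
        split_ifs with hc
        · rfl
        · simp
      have hsummable : ∀ i : Fin 8, Summable (fun p : ℤ × ℤ =>
          if ((p.1 : ZMod N), (p.2 : ZMod N)) = v then g (margInv i p) else 0) := by
        intro i
        apply summable_of_ne_finset_zero
          (s := Finset.Ioo (-(3 * R : ℤ)) (3 * R) ×ˢ Finset.Ioo (-(3 * R : ℤ)) (3 * R))
        intro p hp
        simp only [Finset.mem_product, Finset.mem_Ioo, not_and_or, not_and, not_lt] at hp
        have : g (margInv i p) = 0 := by
          apply marg_supp R g hsupp i p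
          push_cast
          rw [le_abs, le_abs]
          omega
        simp [this]
      rw [step1, Summable.tsum_finsetSum (fun i _ => hsummable i)]
      congr 1
      exact Finset.sum_congr rfl fun i _ => (tsum_ite_marg N g i v).symm
    have : ∀ v : ZMod N × ZMod N,
        ‖(1 / 8 : ℂ) * ∑ i : Fin 8, reduceMod N g (margInv i v)‖ ^ 2
          = ‖reduceMod N h v‖ ^ 2 := fun v => by rw [key v]
    rw [Finset.sum_congr rfl fun v _ => this v,
      sum_sq_reduce (3 * R) h hsh N (by omega)]
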